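/- Let S be a unipotent numerical monoid with S* := S \ {1ₙ}. Then S* \ (S* S*) is the unique minimal generating set of S: it generates S, and it is contained in every generating set of S. -/

import Mathlib

open Matrix Set Pointwise

/-- The general linear group of `n × n` integer matrices. -/
abbrev GLn (n : ℕ) := Matrix.GeneralLinearGroup (Fin n) ℤ

/-- `A` is an upper unitriangular matrix (the group `U(n)`). -/
def Unitri {n : ℕ} (A : GLn n) : Prop :=
  (∀ i : Fin n, (A : Matrix (Fin n) (Fin n) ℤ) i i = 1) ∧
  ∀ i j : Fin n, j < i → (A : Matrix (Fin n) (Fin n) ℤ) i j = 0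

/-- `G(ℕ)`: the points of the subgroup `G` all of whose entries are natural numbers. -/
def GNat {n : ℕ} (G : Subgroup (GLn n)) : Set (GLn n) :=
  {A | A ∈ G ∧ ∀ i j : Fin n, 0 ≤ (A : Matrix (Fin n) (Fin n) ℤ) i j}

/-- A unipotent numerical monoid in `G`: a finitely generated submonoid of `G(ℕ)`
with finite complement in `G(ℕ)`. -/
def IsUNM {n : ℕ} (G : Subgroup (GLn n)) (S : Set (GLn n)) : Prop :=
  S ⊆ GNat G ∧ (1 : GLn n) ∈ S ∧ (∀ A ∈ S, ∀ B ∈ S, A * B ∈ S) ∧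
  (GNat G \ S).Finite ∧
  ∃ F : Finset (GLn n), (Submonoid.closure (F : Set (GLn n)) : Set (GLn n)) = S

/-- `S* \ (S* S*)` is the unique minimal generating set of the unipotent numerical
monoid `S`: it generates `S` and is contained in every generating set of `S`. -/
def offd {n : ℕ} (M : Matrix (Fin n) (Fin n) ℤ) : ℤ :=
  ∑ p ∈ Finset.univ.filter (fun p : Fin n × Fin n => p.1 ≠ p.2), M p.1 p.2

lemma offd_nonneg {n : ℕ} (M : Matrix (Fin n) (Fin n) ℤ)
    (h : ∀ i j, 0 ≤ M i j) : 0 ≤ offd M :=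
  Finset.sum_nonneg fun p _ => h p.1 p.2

lemma offd_eq_zero {n : ℕ} (M : Matrix (Fin n) (Fin n) ℤ)
    (h : ∀ i j, 0 ≤ M i j) (hd : ∀ i, M i i = 1) (h0 : offd M = 0) :
    M = 1 := by
  have hz := (Finset.sum_eq_zero_iff_of_nonneg (fun p _ => h p.1 p.2)).mp h0
  ext i j
  by_cases hij : i = j
  · subst hij; simp [hd i]
  · have := hz (i, j) (Finset.mem_filter.mpr ⟨Finset.mem_univ _, hij⟩)
    simp [Matrix.one_apply_ne hij, this]

lemma offd_mul_ge {n : ℕ} (A B : Matrix (Fin n) (Fin n) ℤ)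
    (hA1 : ∀ i, A i i = 1) (hB1 : ∀ i, B i i = 1)
    (hA : ∀ i j, 0 ≤ A i j) (hB : ∀ i j, 0 ≤ B i j) :
    offd A + offd B ≤ offd (A * B) := by
  unfold offd
  rw [← Finset.sum_add_distrib]
  refine Finset.sum_le_sum ?_
  rintro ⟨i, j⟩ hp
  have hij : i ≠ j := (Finset.mem_filter.mp hp).2
  rw [Matrix.mul_apply]
  calc A i j + B i j = ∑ k ∈ ({i, j} : Finset (Fin n)), A i k * B k j := by
        rw [Finset.sum_pair hij, hA1, hB1]; ring
    _ ≤ ∑ k, A i k * B k j :=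
        Finset.sum_le_sum_of_subset_of_nonneg (Finset.subset_univ _)
          (fun k _ _ => mul_nonneg (hA i k) (hB k j))

theorem unique_minimal_generating_set {n : ℕ} (G : Subgroup (GLn n))
    (hG : ∀ A ∈ G, Unitri A) (S : Set (GLn n)) (hS : IsUNM G S) :
    (Submonoid.closure ((S \ {1}) \ ((S \ {1}) * (S \ {1}))) : Set (GLn n)) = S ∧
    ∀ B : Set (GLn n), (Submonoid.closure B : Set (GLn n)) = S →
      (S \ {1}) \ ((S \ {1}) * (S \ {1})) ⊆ B := by
  obtain ⟨hsub, hone, hmul, -, -⟩ := hS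
  set T := S \ ({1} : Set (GLn n)) with hT
  set M := T \ (T * T) with hM
  -- basic facts about elements of S
  have nonneg : ∀ A ∈ S, ∀ i j, 0 ≤ (A : Matrix (Fin n) (Fin n) ℤ) i j :=
    fun A hA => (hsub hA).2
  have diag : ∀ A ∈ S, ∀ i, (A : Matrix (Fin n) (Fin n) ℤ) i i = 1 :=
    fun A hA => (hG A (hsub hA).1).1
  have f_nonneg : ∀ A ∈ S, 0 ≤ offd (A : Matrix (Fin n) (Fin n) ℤ) :=
    fun A hA => offd_nonneg _ (nonneg A hA)
  have f_zero : ∀ A ∈ S, offd (A : Matrix (Fin n) (Fin n) ℤ) = 0 → A = 1 := by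
    intro A hA h0
    exact Units.ext (by simpa using offd_eq_zero _ (nonneg A hA) (diag A hA) h0)
  have f_pos : ∀ A ∈ S, A ≠ 1 → 1 ≤ offd (A : Matrix (Fin n) (Fin n) ℤ) := by
    intro A hA h1
    have h0 : offd (A : Matrix (Fin n) (Fin n) ℤ) ≠ 0 := fun h => h1 (f_zero A hA h)
    have := f_nonneg A hA
    omega
  have f_mul : ∀ A ∈ S, ∀ B ∈ S,
      offd (A : Matrix (Fin n) (Fin n) ℤ) + offd (B : Matrix (Fin n) (Fin n) ℤ)
        ≤ offd ((A * B : GLn n) : Matrix (Fin n) (Fin n) ℤ) := by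
    intro A hA B hB
    have : ((A * B : GLn n) : Matrix (Fin n) (Fin n) ℤ)
        = (A : Matrix (Fin n) (Fin n) ℤ) * (B : Matrix (Fin n) (Fin n) ℤ) := rfl
    rw [this]
    exact offd_mul_ge _ _ (diag A hA) (diag B hB) (nonneg A hA) (nonneg B hB)
  have hMS : M ⊆ S := fun x hx => hx.1.1
  constructor
  · -- closure M = S
    apply Set.Subset.antisymm
    · -- closure M ⊆ S
      have : Submonoid.closure M ≤
          { carrier := S, mul_mem' := fun {a b} ha hb => hmul a ha b hb,
            one_mem' := hone } := Submonoid.closure_le.mpr hMS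
      exact fun x hx => this hx
    · -- S ⊆ closure M, by induction on offd
      have main : ∀ m : ℕ, ∀ A ∈ S, offd (A : Matrix (Fin n) (Fin n) ℤ) ≤ (m : ℤ) →
          A ∈ Submonoid.closure M := by
        intro m
        induction m with
        | zero =>
          intro A hA hle
          have : A = 1 := f_zero A hA (le_antisymm hle (f_nonneg A hA))
          rw [this]; exact one_mem _
        | succ m ih =>
          intro A hA hle
          by_cases h1 : A = 1
          · rw [h1]; exact one_mem _
          by_cases hAM : A ∈ M
          · exact Submonoid.subset_closure hAM
          · have hAT : A ∈ T := ⟨hA, h1⟩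
            have hATT : A ∈ T * T := by
              by_contra h
              exact hAM ⟨hAT, h⟩
            obtain ⟨b, hb, c, hc, rfl⟩ := hATT
            have hbS : b ∈ S := hb.1
            have hcS : c ∈ S := hc.1
            have hb1 : b ≠ 1 := hb.2
            have hc1 : c ≠ 1 := hc.2
            have hfb := f_pos b hbS hb1
            have hfc := f_pos c hcS hc1
            have hle' := f_mul b hbS c hcS
            simp only [Units.val_mul] at hle hle'
            have hbm : offd (b : Matrix (Fin n) (Fin n) ℤ) ≤ (m : ℤ) := by
              push_cast at hle ⊢; omega
            have hcm : offd (c : Matrix (Fin n) (Fin n) ℤ) ≤ (m : ℤ) := by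
              push_cast at hle ⊢; omega
            exact mul_mem (ih b hbS hbm) (ih c hcS hcm)
      intro A hA
      exact main (offd (A : Matrix (Fin n) (Fin n) ℤ)).toNat A hA
        (le_of_eq (Int.toNat_of_nonneg (f_nonneg A hA)).symm)
  · -- minimality
    intro B hB x hx
    obtain ⟨⟨hxS, hx1⟩, hxTT⟩ := hx
    have hxne : x ≠ 1 := hx1
    have hBS : B ⊆ S := by rw [← hB]; exact Submonoid.subset_closure
    have hxcl : x ∈ Submonoid.closure B := by
      show x ∈ (Submonoid.closure B : Set (GLn n)); rw [hB]; exact hxS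
    obtain ⟨l, hlmem, hlprod⟩ := Submonoid.exists_list_of_mem_closure hxcl
    -- claim: a product of elements of B which is ≠ 1 and not in T*T lies in B
    have claim : ∀ l : List (GLn n), (∀ y ∈ l, y ∈ B) → l.prod ≠ 1 →
        l.prod ∉ T * T → l.prod ∈ B := by
      intro l
      induction l with
      | nil => intro _ h1 _; exact absurd List.prod_nil h1
      | cons a t ih =>
        intro hmem h1 hTT
        rw [List.prod_cons] at h1 hTT ⊢
        by_cases hta : a = 1
        · rw [hta, one_mul] at h1 hTT ⊢
          exact ih (fun y hy => hmem y (List.mem_cons_of_mem _ hy)) h1 hTT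
        by_cases htp : t.prod = 1
        · rw [htp, mul_one]
          exact hmem a List.mem_cons_self
        · exfalso
          apply hTT
          have haS : a ∈ S := hBS (hmem a List.mem_cons_self)
          have htS : t.prod ∈ S := by
            rw [← hB]
            exact Submonoid.list_prod_mem _
              (fun y hy => Submonoid.subset_closure (hmem y (List.mem_cons_of_mem _ hy)))
          exact Set.mul_mem_mul ⟨haS, hta⟩ ⟨htS, htp⟩
    rw [← hlprod]
    exact claim l hlmem (hlprod ▸ hxne) (hlprod ▸ hxTT)
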